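/- Let E be a real Hilbert space, let G : E → ℝ be convex and lower semicontinuous, let y ∈ E, γ > 0, and define φ : E → ℝ by φ(z) = ‖y − z‖²/(2γ). Then for every ε ≥ 0 and every z ∈ E: p ∈ ∂_ε (G + φ)(z) if and only if there exist ε₁, ε₂ ≥ 0 with ε₁ + ε₂ = ε and vectors p₁ ∈ ∂_{ε₁} G(z), p₂ ∈ ∂_{ε₂} φ(z) with p = p₁ + p₂. -/

import Mathlib

open RealInnerProductSpace

section Aux

variable {E : Type*} [NormedAddCommGroup E] [InnerProductSpace ℝ E]

private lemma quad_mid (y a b : E) :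
    ‖y - (2⁻¹:ℝ)•(a+b)‖^2 = (‖y-a‖^2 + ‖y-b‖^2)/2 - ‖a-b‖^2/4 := by
  have h1 : y - (2⁻¹:ℝ)•(a+b) = (2⁻¹:ℝ) • ((y-a)+(y-b)) := by module
  have h2 := parallelogram_law_with_norm ℝ (y-a) (y-b)
  rw [show (y-a)-(y-b) = b-a from by abel] at h2
  rw [h1, norm_smul, norm_sub_rev a b]
  have h3 : ‖(2⁻¹:ℝ)‖ = 2⁻¹ := by norm_num
  rw [h3]
  linear_combination h2/4

private lemma quad_seg (t : ℝ) (y u v : E) :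
    ‖y - (u + t•(v-u))‖^2 = ‖y-u‖^2 - 2*t*⟪y-u, v-u⟫ + t^2*‖v-u‖^2 := by
  have h1 : y - (u + t•(v-u)) = (y-u) - t•(v-u) := by module
  rw [h1, norm_sub_sq_real, real_inner_smul_right, norm_smul, Real.norm_eq_abs,
    mul_pow, sq_abs]
  ring

private lemma quad_I1 (y u z w : E) :
    ‖y-w‖^2 - ‖y-z‖^2 - 2*⟪u-y, w-z⟫ + ‖u-z‖^2 = ‖w-u‖^2 := by
  have h1 : y - w = (y-u) - (w-u) := by abel
  have h2 : y - z = (y-u) - (z-u) := by abel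
  have h3 : u - y = -(y-u) := by abel
  have h4 : w - z = (w-u) - (z-u) := by abel
  have h5 : u - z = -(z-u) := by abel
  rw [h1, h2, h3, h4, h5, norm_neg, norm_sub_sq_real, norm_sub_sq_real (y-u) (z-u)]
  simp only [inner_neg_left, inner_sub_right]
  ring

private lemma quad_I2 (y u z : E) :
    ‖y-z‖^2 = ‖y-u‖^2 + 2*⟪y-u, u-z⟫ + ‖u-z‖^2 := by
  rw [show y - z = (y-u) + (u-z) from by abel, norm_add_sq_real]

end Aux

/-- Decomposition of the ε-subdifferential of the sum of a convex lsc function and a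
quadratic (Lemma 3.3 of the paper). -/
theorem eps_subdifferential_sum_convex_quadratic
    {E : Type*} [NormedAddCommGroup E] [InnerProductSpace ℝ E] [CompleteSpace E]
    (G : E → ℝ) (hGconv : ConvexOn ℝ Set.univ G) (hGlsc : LowerSemicontinuous G)
    (y : E) (γ : ℝ) (hγ : 0 < γ) (ε : ℝ) (hε : 0 ≤ ε) (z p : E) :
    (∀ w : E,
        G w + ‖y - w‖ ^ 2 / (2 * γ)
          ≥ G z + ‖y - z‖ ^ 2 / (2 * γ) + ⟪p, w - z⟫ - ε) ↔
      ∃ ε₁ ε₂ : ℝ, 0 ≤ ε₁ ∧ 0 ≤ ε₂ ∧ ε₁ + ε₂ = ε ∧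
        ∃ p₁ p₂ : E,
          (∀ w : E, G w ≥ G z + ⟪p₁, w - z⟫ - ε₁) ∧
          (∀ w : E, ‖y - w‖ ^ 2 / (2 * γ)
              ≥ ‖y - z‖ ^ 2 / (2 * γ) + ⟪p₂, w - z⟫ - ε₂) ∧
          p = p₁ + p₂ := by
  have hγ' : γ ≠ 0 := ne_of_gt hγ
  have h2γ : (0:ℝ) < 2*γ := by linarith
  constructor
  · intro h
    set F : E → ℝ := fun w => G w + ‖y - w‖^2/(2*γ) - ⟪p, w - z⟫ with hF
    have hFz : F z = G z + ‖y - z‖^2/(2*γ) := by simp [hF]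
    have hlow : ∀ w, F z - ε ≤ F w := by
      intro w
      rw [hFz]; simp only [hF]
      linarith [h w]
    have hbdd : BddBelow (Set.range F) := ⟨F z - ε, by rintro _ ⟨w, rfl⟩; exact hlow w⟩
    have hm_le : ∀ w, (⨅ w, F w) ≤ F w := fun w => ciInf_le hbdd w
    have hm_ge : F z - ε ≤ ⨅ w, F w := le_ciInf hlow
    set m := ⨅ w, F w with hm
    -- minimizing sequence
    have hseq : ∀ n : ℕ, ∃ w, F w < m + 1/(n+1) := by
      intro n
      apply exists_lt_of_ciInf_lt
      have h0 : (0:ℝ) < 1/(n+1) := by positivity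
      linarith
    choose x hx using hseq
    -- strong convexity: midpoint inequality
    have hmidF : ∀ a b : E, F ((2⁻¹:ℝ)•(a+b)) ≤ (F a + F b)/2 - ‖a-b‖^2/(8*γ) := by
      intro a b
      have hGc : G ((2⁻¹:ℝ)•(a+b)) ≤ 2⁻¹*G a + 2⁻¹*G b := by
        rw [show (2⁻¹:ℝ)•(a+b) = (2⁻¹:ℝ)•a + (2⁻¹:ℝ)•b from by module]
        exact hGconv.2 (Set.mem_univ a) (Set.mem_univ b) (by norm_num) (by norm_num)
          (by norm_num)
      have hq : ‖y - (2⁻¹:ℝ)•(a+b)‖^2/(2*γ)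
          = ‖y-a‖^2/(4*γ) + ‖y-b‖^2/(4*γ) - ‖a-b‖^2/(8*γ) := by
        rw [quad_mid]; ring
      have hi : ⟪p, (2⁻¹:ℝ)•(a+b) - z⟫ = (⟪p,a-z⟫ + ⟪p,b-z⟫)/2 := by
        rw [show (2⁻¹:ℝ)•(a+b) - z = (2⁻¹:ℝ)•((a-z)+(b-z)) from by module,
          real_inner_smul_right, inner_add_right]
        ring
      simp only [hF]
      rw [hq, hi]
      have e1 : ‖y-a‖^2/(2*γ) = 2*(‖y-a‖^2/(4*γ)) := by ring
      have e2 : ‖y-b‖^2/(2*γ) = 2*(‖y-b‖^2/(4*γ)) := by ring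
      linarith [hGc]
    -- Cauchy
    have hcauchy : CauchySeq x := by
      apply cauchySeq_of_le_tendsto_0 (fun N : ℕ => Real.sqrt (8*γ*(1/(N+1))))
      · intro n k N hn hk
        have h1 := hmidF (x n) (x k)
        have h2 := hm_le ((2⁻¹:ℝ)•(x n + x k))
        have h3 := hx n
        have h4 := hx k
        have h6 : 1/((n:ℝ)+1) ≤ 1/((N:ℝ)+1) := by
          apply one_div_le_one_div_of_le (by positivity)
          have : (N:ℝ) ≤ n := Nat.cast_le.mpr hn
          linarith
        have h7 : 1/((k:ℝ)+1) ≤ 1/((N:ℝ)+1) := by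
          apply one_div_le_one_div_of_le (by positivity)
          have : (N:ℝ) ≤ k := Nat.cast_le.mpr hk
          linarith
        have h8 : ‖x n - x k‖^2 ≤ 8*γ*(1/(N+1)) := by
          have h9 : ‖x n - x k‖^2/(8*γ) ≤ 1/((N:ℝ)+1) := by linarith
          rw [div_le_iff₀ (by positivity)] at h9
          push_cast
          linarith
        rw [dist_eq_norm]
        calc ‖x n - x k‖ = Real.sqrt (‖x n - x k‖^2) := (Real.sqrt_sq (norm_nonneg _)).symm
          _ ≤ Real.sqrt (8*γ*(1/(N+1))) := Real.sqrt_le_sqrt h8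
      · have h1 : Filter.Tendsto (fun N:ℕ => 8*γ*(1/((N:ℝ)+1))) Filter.atTop (nhds 0) := by
          have := tendsto_one_div_add_atTop_nhds_zero_nat.const_mul (8*γ)
          simpa using this
        have h2 := (Real.continuous_sqrt.tendsto 0).comp h1
        simpa [Function.comp_def] using h2
    obtain ⟨u, hu⟩ := cauchySeq_tendsto_of_complete hcauchy
    -- F u ≤ m by lower semicontinuity
    have hCcont : Continuous (fun w : E => ‖y - w‖^2/(2*γ) - ⟪p, w - z⟫) := by
      apply Continuous.sub
      · exact (((continuous_const.sub continuous_id).norm.pow 2).div_const _)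
      · exact Continuous.inner continuous_const (continuous_id.sub continuous_const)
    have hFum : F u ≤ m := by
      apply le_of_forall_pos_le_add
      intro η hη
      have hE1 : ∀ᶠ n in Filter.atTop, G u - η/3 < G (x n) :=
        hu.eventually (hGlsc u (G u - η/3) (by linarith))
      have hE2 : ∀ᶠ n in Filter.atTop,
          (‖y - u‖^2/(2*γ) - ⟪p, u - z⟫) - η/3 < ‖y - x n‖^2/(2*γ) - ⟪p, x n - z⟫ :=
        (hCcont.continuousAt.tendsto.comp hu).eventually (eventually_gt_nhds (by linarith))
      have hE3 : ∀ᶠ n : ℕ in Filter.atTop, (1:ℝ)/(n+1) < η/3 :=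
        tendsto_one_div_add_atTop_nhds_zero_nat.eventually (eventually_lt_nhds (by linarith))
      obtain ⟨n, ⟨h1, h2⟩, h3⟩ := ((hE1.and hE2).and hE3).exists
      have h4 := hx n
      simp only [hF] at h4 ⊢
      linarith
    have hmin : ∀ w, F u ≤ F w := fun w => le_trans hFum (hm_le w)
    -- exact subgradient of G at u
    have hinner2 : ∀ d : E, ⟪p - γ⁻¹•(u-y), d⟫ = ⟪p,d⟫ + γ⁻¹*⟪y-u,d⟫ := by
      intro d
      rw [inner_sub_left, real_inner_smul_left, show (u:E)-y = -(y-u) from by abel,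
        inner_neg_left]
      ring
    have hp1 : ∀ v, G u + ⟪p - γ⁻¹•(u-y), v - u⟫ ≤ G v := by
      intro v
      apply le_of_forall_pos_le_add
      intro η hη
      set K := ‖v-u‖^2/(2*γ) with hK
      have hK0 : 0 ≤ K := by positivity
      set t := min 1 (η/(K+1)) with ht
      have ht0 : 0 < t := lt_min one_pos (by positivity)
      have ht1 : t ≤ 1 := min_le_left _ _
      have htK : t*K ≤ η := by
        have h1 : t ≤ η/(K+1) := min_le_right _ _
        have h2 : t*K ≤ (η/(K+1))*K := mul_le_mul_of_nonneg_right h1 hK0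
        have h3 : (η/(K+1))*K ≤ η := by
          rw [div_mul_eq_mul_div, div_le_iff₀ (by positivity)]
          nlinarith
        linarith
      have hGc : G (u + t•(v-u)) ≤ t * G v + (1-t) * G u := by
        rw [show u + t•(v-u) = t•v + (1-t)•u from by module]
        exact hGconv.2 (Set.mem_univ v) (Set.mem_univ u) ht0.le (by linarith) (by ring)
      have hquadt : ‖y - (u + t•(v-u))‖^2/(2*γ)
          = ‖y-u‖^2/(2*γ) - t*(γ⁻¹*⟪y-u,v-u⟫) + t^2*K := by
        rw [quad_seg, hK]; ring
      have hinnert : ⟪p, (u + t•(v-u)) - z⟫ = ⟪p,u-z⟫ + t*⟪p,v-u⟫ := by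
        rw [show (u + t•(v-u)) - z = (u-z) + t•(v-u) from by module, inner_add_right,
          real_inner_smul_right]
      have h6 := hmin (u + t•(v-u))
      simp only [hF] at h6
      rw [hquadt, hinnert] at h6
      have h7 : 0 ≤ t * (G v - G u - ⟪p,v-u⟫ - γ⁻¹*⟪y-u,v-u⟫ + t*K) := by
        nlinarith [h6, hGc]
      have h8 : 0 ≤ G v - G u - ⟪p,v-u⟫ - γ⁻¹*⟪y-u,v-u⟫ + t*K :=
        (mul_nonneg_iff_of_pos_left ht0).mp h7
      rw [hinner2 (v-u)]
      linarith
    -- assemble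
    have hI2 : ‖y-z‖^2/(2*γ) = ‖y-u‖^2/(2*γ) + γ⁻¹*⟪y-u,u-z⟫ + ‖u-z‖^2/(2*γ) := by
      rw [quad_I2 y u z]; ring
    have hzu : ⟪p - γ⁻¹•(u-y), z - u⟫ = ⟪p,z-u⟫ + γ⁻¹*⟪y-u,z-u⟫ := hinner2 (z-u)
    have hneg1 : ⟪p, z-u⟫ = -⟪p, u-z⟫ := by
      rw [show (z:E)-u = -(u-z) from by abel, inner_neg_right]
    have hneg2 : ⟪y-u, z-u⟫ = -⟪y-u, u-z⟫ := by
      rw [show (z:E)-u = -(u-z) from by abel, inner_neg_right]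
    have hkey : (G z - G u - ⟪p - γ⁻¹•(u-y), z - u⟫) + ‖u-z‖^2/(2*γ) ≤ ε := by
      have h1 := hlow u
      rw [hFz] at h1
      simp only [hF] at h1
      rw [hzu, hneg1, hneg2]
      linarith [hI2, h1]
    have hdz : 0 ≤ G z - G u - ⟪p - γ⁻¹•(u-y), z - u⟫ := by
      have := hp1 z
      linarith
    refine ⟨ε - ‖u-z‖^2/(2*γ), ‖u-z‖^2/(2*γ), by linarith, by positivity, by ring,
      p - γ⁻¹•(u-y), γ⁻¹•(u-y), ?_, ?_, by abel⟩
    · intro w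
      have h1 := hp1 w
      have h2 : ⟪p - γ⁻¹•(u-y), w-u⟫ = ⟪p - γ⁻¹•(u-y), w-z⟫ + ⟪p - γ⁻¹•(u-y), z-u⟫ := by
        rw [← inner_add_right]
        congr 1
        abel
      rw [h2] at h1
      rw [ge_iff_le]
      linarith
    · intro w
      have h10 : ‖y - w‖^2/(2*γ) - (‖y - z‖^2/(2*γ) + γ⁻¹*⟪u - y, w - z⟫ - ‖u - z‖^2/(2*γ))
          = ‖w - u‖^2/(2*γ) := by
        linear_combination (quad_I1 y u z w)/(2*γ)
      have h11 : (0:ℝ) ≤ ‖w - u‖^2/(2*γ) := by positivity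
      rw [ge_iff_le, real_inner_smul_left]
      linarith
  · rintro ⟨ε₁, ε₂, h1, h2, h3, p₁, p₂, hp1, hp2, rfl⟩
    intro w
    have hI : ⟪p₁+p₂, w-z⟫ = ⟪p₁,w-z⟫ + ⟪p₂,w-z⟫ := inner_add_left _ _ _
    rw [ge_iff_le, hI]
    linarith [hp1 w, hp2 w]
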